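/- Let k be a field and let A and B be commutative k-algebras, each finite-dimensional over k and classically separable over k. Then the tensor product A ⊗_k B is finite-dimensional over k and classically separable over k. -/

import Mathlib

/-!
STATEMENT 13: The tensor product of two finite classically separable commutative k-algebras
is finite and classically separable.
-/

open TensorProduct

universe u

/-- A commutative algebra `A` over a field `k` is classically separable if for every field
extension `k ⊆ K` the ring `K ⊗[k] A` has zero Jacobson radical. -/
def ClassicallySeparable (k : Type u) [Field k] (A : Type u) [CommRing A]
    [Algebra k A] : Prop :=
  ∀ (K : Type u) [Field K] [Algebra k K],
    (⊥ : Ideal (K ⊗[k] A)).jacobson = ⊥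


lemma jacEqNil (R : Type*) [CommRing R] [IsArtinianRing R] :
    (⊥ : Ideal R).jacobson = nilradical R := by
  apply le_antisymm
  · obtain ⟨n, hn⟩ := IsArtinianRing.isNilpotent_jacobson_bot (R := R)
    intro x hx
    rw [mem_nilradical]
    refine ⟨n, ?_⟩
    have : x ^ n ∈ (⊥ : Ideal R).jacobson ^ n := Ideal.pow_mem_pow hx n
    rw [hn] at this
    simpa using this
  · rw [Ideal.jacobson]
    refine le_sInf ?_
    rintro J ⟨-, hJ⟩
    exact nilradical_le_prime J (H := hJ.isPrime)

lemma jacBotIffReduced (R : Type*) [CommRing R] [IsArtinianRing R] :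
    (⊥ : Ideal R).jacobson = ⊥ ↔ IsReduced R := by
  rw [jacEqNil]
  constructor
  · intro h
    constructor
    intro x hx
    have : x ∈ nilradical R := hx
    rw [h] at this
    simpa using this
  · intro h
    exact nilradical_eq_zero R

set_option maxHeartbeats 1000000
set_option synthInstance.maxHeartbeats 400000

lemma mainRed (K C D : Type u) [Field K] [CommRing C] [Algebra K C]
    [CommRing D] [Algebra K D] [Module.Finite K D] [IsReduced D]
    (hC : ∀ (E : Type u) [Field E] [Algebra K E], IsReduced (E ⊗[K] C)) :
    IsReduced (C ⊗[K] D) := by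
  haveI : IsArtinianRing D := isArtinian_of_tower K inferInstance
  haveI : Finite {I : Ideal D | I.IsMaximal} := (IsArtinianRing.setOfPred_isMaximal_finite D).to_subtype
  haveI : Fintype {I : Ideal D | I.IsMaximal} := Fintype.ofFinite _
  haveI : DecidableEq {I : Ideal D | I.IsMaximal} := Classical.decEq _
  let g : D →ₗ[K] (∀ i : {I : Ideal D | I.IsMaximal}, D ⧸ (i : Ideal D)) :=
    LinearMap.pi fun i => (Ideal.Quotient.mkₐ K (i : Ideal D)).toLinearMap
  have hg : Function.Injective g := by
    intro a b hab
    have h0 : g (a - b) = 0 := by rw [map_sub, hab, sub_self]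
    have hmem : a - b ∈ (⊥ : Ideal D).jacobson := by
      rw [Ideal.jacobson, Ideal.mem_sInf]
      rintro J ⟨-, hJ⟩
      have := congrFun h0 ⟨J, hJ⟩
      exact Ideal.Quotient.eq_zero_iff_mem.mp this
    rw [jacEqNil, nilradical_eq_zero] at hmem
    rw [← sub_eq_zero]
    simpa using hmem
  have hinj : Function.Injective (LinearMap.lTensor C g) :=
    Module.Flat.lTensor_preserves_injective_linearMap g hg
  have key : ∀ y : C ⊗[K] D, TensorProduct.piRightHom K K C _ (LinearMap.lTensor C g y)
      = fun i : {I : Ideal D | I.IsMaximal} => (Algebra.TensorProduct.map (AlgHom.id K C)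
        (Ideal.Quotient.mkₐ K (i : Ideal D))) y := by
    intro y
    induction y with
    | zero => funext i; simp
    | add a b ha hb => funext i; rw [map_add, map_add, map_add]
                       rw [ha, hb]; simp
    | tmul cc d => funext i; simp [g]
  refine ⟨fun x hx => ?_⟩
  have hzero : ∀ i : {I : Ideal D | I.IsMaximal},
      (Algebra.TensorProduct.map (AlgHom.id K C) (Ideal.Quotient.mkₐ K (i : Ideal D))) x = 0 := by
    intro i
    haveI : (i : Ideal D).IsMaximal := i.2
    letI : Field (D ⧸ (i : Ideal D)) := Ideal.Quotient.field _
    haveI : IsReduced (C ⊗[K] (D ⧸ (i : Ideal D))) := by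
      haveI := hC (D ⧸ (i : Ideal D))
      exact isReduced_of_injective
        (Algebra.TensorProduct.comm K C (D ⧸ (i : Ideal D))).toAlgHom.toRingHom
        (Algebra.TensorProduct.comm K C (D ⧸ (i : Ideal D))).injective
    exact IsNilpotent.eq_zero (hx.map _)
  have hzt : LinearMap.lTensor C g x = 0 := by
    apply (TensorProduct.piRight K K C _).injective
    rw [map_zero, TensorProduct.piRight_apply, key]
    funext i
    exact hzero i
  have h00 : LinearMap.lTensor C g x = LinearMap.lTensor C g 0 := by
    rw [map_zero]; exact hzt
  exact hinj h00


section Cancel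
variable (k K E A : Type u) [Field k] [Field K] [Algebra k K] [Field E]
  [Algebra K E] [Algebra k E] [IsScalarTower k K E]
  [CommRing A] [Algebra k A]

noncomputable def phiI2 : E ⊗[K] (K ⊗[k] A) →ₐ[K] E ⊗[k] A :=
  Algebra.TensorProduct.lift
    (Algebra.TensorProduct.includeLeft : E →ₐ[K] E ⊗[k] A)
    (Algebra.TensorProduct.map (Algebra.ofId K E) (AlgHom.id k A))
    (fun _ _ => Commute.all _ _)

noncomputable def psiI2 : E ⊗[k] A →ₐ[K] E ⊗[K] (K ⊗[k] A) :=
  Algebra.TensorProduct.lift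
    (Algebra.TensorProduct.includeLeft : E →ₐ[K] E ⊗[K] (K ⊗[k] A))
    (((Algebra.TensorProduct.includeRight :
        (K ⊗[k] A) →ₐ[K] E ⊗[K] (K ⊗[k] A)).restrictScalars k).comp
      (Algebra.TensorProduct.includeRight : A →ₐ[k] K ⊗[k] A))
    (fun _ _ => Commute.all _ _)

lemma psiI2_phiI2 (x : E ⊗[K] (K ⊗[k] A)) : psiI2 k K E A (phiI2 k K E A x) = x := by
  induction x with
  | zero => simp
  | add a b ha hb => simp [map_add, ha, hb]
  | tmul e y =>
    induction y with
    | zero => simp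
    | add a b ha hb =>
      rw [tmul_add, map_add, map_add, ha, hb]
    | tmul c a =>
      simp only [phiI2, psiI2, Algebra.TensorProduct.lift_tmul,
        Algebra.TensorProduct.includeLeft_apply, Algebra.TensorProduct.map_tmul,
        AlgHom.coe_id, id_eq, map_mul, AlgHom.coe_comp, AlgHom.coe_restrictScalars',
        Function.comp_apply, Algebra.TensorProduct.includeRight_apply]
      rw [Algebra.TensorProduct.tmul_mul_tmul, Algebra.TensorProduct.tmul_mul_tmul]
      simp only [mul_one, one_mul, Algebra.ofId_apply]
      rw [Algebra.TensorProduct.tmul_mul_tmul, mul_comm e, ← Algebra.smul_def,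
        smul_tmul]
      simp [smul_tmul', smul_eq_mul]

lemma phiI2_injective : Function.Injective (phiI2 k K E A) :=
  Function.LeftInverse.injective (psiI2_phiI2 k K E A)

end Cancel



section Split
variable (k K A B : Type u) [Field k] [Field K] [Algebra k K]
  [CommRing A] [Algebra k A] [CommRing B] [Algebra k B]

noncomputable def thetaS : K ⊗[k] (A ⊗[k] B) →ₐ[K] (K ⊗[k] A) ⊗[K] (K ⊗[k] B) :=
  Algebra.TensorProduct.lift
    (Algebra.ofId K _)
    (Algebra.TensorProduct.lift
      (((Algebra.TensorProduct.includeLeft :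
          (K ⊗[k] A) →ₐ[K] (K ⊗[k] A) ⊗[K] (K ⊗[k] B)).restrictScalars k).comp
        (Algebra.TensorProduct.includeRight : A →ₐ[k] K ⊗[k] A))
      (((Algebra.TensorProduct.includeRight :
          (K ⊗[k] B) →ₐ[K] (K ⊗[k] A) ⊗[K] (K ⊗[k] B)).restrictScalars k).comp
        (Algebra.TensorProduct.includeRight : B →ₐ[k] K ⊗[k] B))
      (fun _ _ => Commute.all _ _))
    (fun _ _ => Commute.all _ _)

noncomputable def thetaS' : (K ⊗[k] A) ⊗[K] (K ⊗[k] B) →ₐ[K] K ⊗[k] (A ⊗[k] B) :=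
  Algebra.TensorProduct.lift
    (Algebra.TensorProduct.map (AlgHom.id K K)
      (Algebra.TensorProduct.includeLeft : A →ₐ[k] A ⊗[k] B))
    (Algebra.TensorProduct.map (AlgHom.id K K)
      (Algebra.TensorProduct.includeRight : B →ₐ[k] A ⊗[k] B))
    (fun _ _ => Commute.all _ _)

lemma thetaS'_thetaS (x : K ⊗[k] (A ⊗[k] B)) : thetaS' k K A B (thetaS k K A B x) = x := by
  induction x with
  | zero => simp
  | add a b ha hb => simp [map_add, ha, hb]
  | tmul c y =>
    induction y with
    | zero => simp
    | add a b ha hb => rw [tmul_add, map_add, map_add, ha, hb]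
    | tmul a b =>
      simp only [thetaS, thetaS', Algebra.TensorProduct.lift_tmul, map_mul,
        Algebra.TensorProduct.includeLeft_apply, Algebra.TensorProduct.includeRight_apply,
        Algebra.TensorProduct.map_tmul, AlgHom.coe_comp, AlgHom.coe_restrictScalars',
        Function.comp_apply, AlgHom.coe_id, id_eq, Algebra.ofId_apply]
      rw [AlgHom.commutes]
      simp only [map_one, mul_one, one_mul, Algebra.TensorProduct.algebraMap_apply,
        Algebra.algebraMap_self, RingHom.id_apply, Algebra.TensorProduct.tmul_mul_tmul,
        mul_one, one_mul]

lemma thetaS_injective : Function.Injective (thetaS k K A B) :=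
  Function.LeftInverse.injective (thetaS'_thetaS k K A B)

end Split


theorem stmt_13 (k : Type u) [Field k] (A : Type u) [CommRing A] [Algebra k A]
    (B : Type u) [CommRing B] [Algebra k B]
    [FiniteDimensional k A] [FiniteDimensional k B]
    (hA : ClassicallySeparable k A) (hB : ClassicallySeparable k B) :
    FiniteDimensional k (A ⊗[k] B) ∧ ClassicallySeparable k (A ⊗[k] B) := by
  refine ⟨inferInstance, ?_⟩
  intro K _ _
  haveI : IsArtinianRing (K ⊗[k] (A ⊗[k] B)) := isArtinian_of_tower K inferInstance
  rw [jacBotIffReduced]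
  have hCred : ∀ (E : Type u) [Field E] [Algebra K E], IsReduced (E ⊗[K] (K ⊗[k] A)) := by
    intro E _ _
    letI : Algebra k E := ((algebraMap K E).comp (algebraMap k K)).toAlgebra
    haveI : IsScalarTower k K E := IsScalarTower.of_algebraMap_eq fun _ => rfl
    haveI : IsArtinianRing (E ⊗[k] A) := isArtinian_of_tower E inferInstance
    haveI : IsReduced (E ⊗[k] A) := (jacBotIffReduced _).mp (hA E)
    exact isReduced_of_injective (phiI2 k K E A).toRingHom (phiI2_injective k K E A)
  haveI : IsArtinianRing (K ⊗[k] B) := isArtinian_of_tower K inferInstance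
  haveI hD : IsReduced (K ⊗[k] B) := (jacBotIffReduced _).mp (hB K)
  haveI := mainRed K (K ⊗[k] A) (K ⊗[k] B) hCred
  exact isReduced_of_injective (thetaS k K A B).toRingHom (thetaS_injective k K A B)
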